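/- Let α ∈ (0, 3]. The bound 2α + 1 for the harmonic pre-Schwarzian norm is best possible: for every ε > 0 there exists t ∈ (0, 1) such that, taking h analytic on 𝔻 with h(0) = 0 and h'(z) = (1 − z)^{−α}, and ω_t(z) = (z − t)/(1 − tz), one has sup_{z∈𝔻} (1 − |z|²)·|h''(z)/h'(z) − conj(ω_t(z))·ω_t'(z)/(1 − |ω_t(z)|²)| ≥ 2α + 1 − ε. -/

import Mathlib

open Complex Metric

lemma key_normSq (t : ℝ) (z : ℂ) :
    Complex.normSq (1 - t*z) - Complex.normSq (z - t) = (1 - t^2) * (1 - Complex.normSq z) := by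
  simp [Complex.normSq_apply, Complex.sub_re, Complex.sub_im, Complex.mul_re, Complex.mul_im]
  ring

lemma den_ne (t : ℝ) (ht : t ∈ Set.Ioo (0:ℝ) 1) {z : ℂ} (hz : ‖z‖ < 1) :
    (1 - (t:ℂ)*z) ≠ 0 := by
  intro hc
  have h1 : (t:ℂ)*z = 1 := by linear_combination -hc
  have := congrArg (‖·‖) h1
  simp only [norm_mul, norm_one, Complex.norm_real, Real.norm_eq_abs] at this
  nlinarith [ht.1, ht.2, norm_nonneg z, abs_of_pos ht.1]

lemma mobius_deriv (t : ℝ) (ht : t ∈ Set.Ioo (0:ℝ) 1) {z : ℂ} (hz : ‖z‖ < 1) :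
    deriv (fun w => (w - (t:ℂ))/(1 - (t:ℂ)*w)) z = (1 - (t:ℂ)^2)/(1 - (t:ℂ)*z)^2 := by
  have hden := den_ne t ht hz
  have h1 : HasDerivAt (fun w : ℂ => w - (t:ℂ)) 1 z := (hasDerivAt_id z).sub_const _
  have h2 : HasDerivAt (fun w : ℂ => 1 - (t:ℂ)*w) (-(t:ℂ)) z := by
    simpa using ((hasDerivAt_id z).const_mul (t:ℂ)).const_sub 1
  have := (h1.div h2 hden).deriv
  rw [show (fun w => (w - (t:ℂ))/(1 - (t:ℂ)*w)) = ((fun w : ℂ => w - (t:ℂ)) / fun w => 1 - (t:ℂ)*w) from rfl, this]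
  congr 1
  ring

lemma one_sub_ne {z : ℂ} (hz : ‖z‖ < 1) : (1 - z) ≠ 0 := by
  intro hc
  have h1 : z = 1 := by linear_combination -hc
  rw [h1] at hz; simp at hz

lemma slit {z : ℂ} (hz : ‖z‖ < 1) : (1 - z) ∈ Complex.slitPlane := by
  rw [Complex.mem_slitPlane_iff]
  left
  have := Complex.re_le_norm z
  simp only [Complex.sub_re, Complex.one_re]
  linarith

lemma second_deriv (α : ℝ) (h : ℂ → ℂ)
    (hd : ∀ z ∈ ball (0:ℂ) 1, deriv h z = (1 - z) ^ (-(α : ℂ)))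
    {z : ℂ} (hz : z ∈ ball (0:ℂ) 1) :
    deriv (deriv h) z = (α:ℂ) * (1 - z) ^ (-(α:ℂ) - 1) := by
  have hz' : ‖z‖ < 1 := by simpa using mem_ball_zero_iff.mp hz
  have hev : deriv h =ᶠ[nhds z] fun w => (1 - w)^(-(α:ℂ)) := by
    filter_upwards [isOpen_ball.mem_nhds hz] with w hw using hd w hw
  rw [hev.deriv_eq]
  have h1 : HasDerivAt (fun w : ℂ => 1 - w) (-1) z := by
    simpa using (hasDerivAt_id z).const_sub 1
  rw [HasDerivAt.deriv (HasDerivAt.cpow_const h1 (slit hz') (c := -(α:ℂ)))]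
  ring

lemma ratio_eq (α : ℝ) (h : ℂ → ℂ)
    (hd : ∀ z ∈ ball (0:ℂ) 1, deriv h z = (1 - z) ^ (-(α : ℂ)))
    {z : ℂ} (hz : z ∈ ball (0:ℂ) 1) :
    deriv (deriv h) z / deriv h z = (α:ℂ) / (1 - z) := by
  have hz' : ‖z‖ < 1 := by simpa using mem_ball_zero_iff.mp hz
  have hne := one_sub_ne hz'
  have hpne : (1 - z) ^ (-(α:ℂ)) ≠ 0 := by
    intro hc
    exact hne ((Complex.cpow_eq_zero_iff _ _).mp hc).1
  rw [second_deriv α h hd hz, hd z hz]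
  have : (1 - z) ^ (-(α:ℂ) - 1) = (1 - z) ^ (-(α:ℂ)) * (1 - z)⁻¹ := by
    rw [show -(α:ℂ) - 1 = -(α:ℂ) + (-1) by ring, Complex.cpow_add _ _ hne, Complex.cpow_neg_one]
  rw [this]
  field_simp

set_option maxHeartbeats 1000000 in
lemma upper (α t : ℝ) (hα : 0 < α) (ht : t ∈ Set.Ioo (0:ℝ) 1) {z : ℂ} (hz : ‖z‖ < 1) :
    (1 - ‖z‖ ^ 2) *
      ‖((α:ℂ)/(1-z) -
        (starRingEnd ℂ) ((z - (t:ℂ))/(1 - (t:ℂ)*z)) * ((1 - (t:ℂ)^2)/(1 - (t:ℂ)*z)^2) /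
          ((1 - ‖((z - (t:ℂ))/(1 - (t:ℂ)*z))‖ ^ 2 : ℝ) : ℂ))‖ ≤ 2*α + 1 := by
  have ht0 := ht.1; have ht1 := ht.2
  set a := ‖z‖ with ha
  have ha0 : 0 ≤ a := norm_nonneg z
  have hden := den_ne t ht hz
  set D := Complex.normSq (1 - (t:ℂ)*z) with hDdef
  have hD : 0 < D := Complex.normSq_pos.mpr hden
  have hprod : 0 < (1 - t^2)*(1 - a^2) := by
    apply mul_pos <;> nlinarith
  have hkey : D - Complex.normSq (z - (t:ℂ)) = (1 - t^2) * (1 - a^2) := by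
    rw [Complex.sq_norm]
    exact key_normSq t z
  have habsw2 : ‖((z - (t:ℂ))/(1 - (t:ℂ)*z))‖ ^ 2 = Complex.normSq (z - (t:ℂ)) / D := by
    rw [norm_div, div_pow, Complex.sq_norm, Complex.sq_norm]
  have hr : (1 - ‖((z - (t:ℂ))/(1 - (t:ℂ)*z))‖ ^ 2) = (1 - t^2)*(1 - a^2)/D := by
    rw [habsw2, ← hkey]; field_simp
  have hrpos : 0 < (1 - t^2)*(1 - a^2)/D := div_pos hprod hD
  have hwle : ‖((z - (t:ℂ))/(1 - (t:ℂ)*z))‖ ≤ 1 := by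
    have h2 : ‖((z - (t:ℂ))/(1 - (t:ℂ)*z))‖ ^ 2 ≤ 1 := by
      rw [habsw2, div_le_one hD]
      nlinarith
    nlinarith [norm_nonneg ((z - (t:ℂ))/(1 - (t:ℂ)*z))]
  have hM : ‖((1 - (t:ℂ)^2)/(1 - (t:ℂ)*z)^2)‖ = (1-t^2)/D := by
    rw [norm_div, norm_pow, Complex.sq_norm,
      show ((1:ℂ) - (t:ℂ)^2) = (((1 - t^2 : ℝ)):ℂ) by push_cast; ring, Complex.norm_real, Real.norm_eq_abs,
      abs_of_pos (by nlinarith : (0:ℝ) < 1 - t^2)]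
  -- abs of second term
  have hB : ‖((starRingEnd ℂ) ((z - (t:ℂ))/(1 - (t:ℂ)*z)) * ((1 - (t:ℂ)^2)/(1 - (t:ℂ)*z)^2) /
          ((1 - ‖((z - (t:ℂ))/(1 - (t:ℂ)*z))‖ ^ 2 : ℝ) : ℂ))‖
      = ‖((z - (t:ℂ))/(1 - (t:ℂ)*z))‖ / (1 - a^2) := by
    have h1 : (1:ℝ)-t^2 ≠ 0 := by nlinarith
    have h2 : (1:ℝ)-a^2 ≠ 0 := by nlinarith
    have h3 : D ≠ 0 := ne_of_gt hD
    have hscal : ∀ W : ℝ, W * ((1 - t ^ 2) / D) / ((1 - t ^ 2) * (1 - a ^ 2) / D) = W / (1 - a ^ 2) := by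
      intro W; field_simp
    rw [norm_div, norm_mul, Complex.norm_conj, Complex.norm_real, Real.norm_eq_abs, hM, hr, abs_of_pos hrpos, hscal]
  have hA : ‖((α:ℂ)/(1-z))‖ = α / ‖(1-z)‖ := by
    rw [norm_div, Complex.norm_real, Real.norm_eq_abs, abs_of_pos hα]
  have hbz : 1 - a ≤ ‖(1-z)‖ := by
    have := norm_sub_norm_le (1:ℂ) z
    simpa using this
  have hbz0 : 0 < ‖(1-z)‖ := norm_pos_iff.mpr (one_sub_ne hz)
  calc (1 - a ^ 2) * ‖((α:ℂ)/(1-z) - _)‖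
      ≤ (1 - a^2) * (‖((α:ℂ)/(1-z))‖ + ‖((starRingEnd ℂ) ((z - (t:ℂ))/(1 - (t:ℂ)*z)) * ((1 - (t:ℂ)^2)/(1 - (t:ℂ)*z)^2) /
          ((1 - ‖((z - (t:ℂ))/(1 - (t:ℂ)*z))‖ ^ 2 : ℝ) : ℂ))‖) := by
        apply mul_le_mul_of_nonneg_left (norm_sub_le _ _) (by nlinarith)
    _ ≤ 2*α + 1 := by
        rw [hA, hB, mul_add]
        have e2 : (1 - a^2) * (‖((z - (t:ℂ))/(1 - (t:ℂ)*z))‖ / (1-a^2))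
            = ‖((z - (t:ℂ))/(1 - (t:ℂ)*z))‖ := by
          rw [mul_comm, div_mul_cancel₀ _ (by nlinarith : (1:ℝ)-a^2 ≠ 0)]
        rw [e2]
        have e1 : (1 - a^2) * (α / ‖(1-z)‖) ≤ α * (1+a) := by
          rw [show (1 - a^2) * (α / ‖(1-z)‖) = ((1-a^2)*α)/‖(1-z)‖ by ring,
            div_le_iff₀ hbz0]
          nlinarith [mul_le_mul_of_nonneg_left hbz (by positivity : (0:ℝ) ≤ α*(1+a))]
        nlinarith [norm_nonneg ((z - (t:ℂ))/(1 - (t:ℂ)*z)), hwle, e1]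

set_option maxHeartbeats 1000000 in
lemma value (α t x : ℝ) (hα : 0 < α) (hx0 : 0 < x) (hxt : x < t) (ht1 : t < 1) :
    (1 - ‖((x:ℂ))‖ ^ 2) *
      ‖((α:ℂ)/(1-(x:ℂ)) -
        (starRingEnd ℂ) (((x:ℂ) - (t:ℂ))/(1 - (t:ℂ)*(x:ℂ))) * ((1 - (t:ℂ)^2)/(1 - (t:ℂ)*(x:ℂ))^2) /
          ((1 - ‖(((x:ℂ) - (t:ℂ))/(1 - (t:ℂ)*(x:ℂ)))‖ ^ 2 : ℝ) : ℂ))‖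
    = α*(1+x) + (t-x)/(1-t*x) := by
  have hx1 : x < 1 := hxt.trans ht1
  have ht0 : 0 < t := hx0.trans hxt
  have htx : 0 < 1 - t*x := by nlinarith
  have hxx : 0 < 1 - x := by linarith
  have hu : (((x:ℂ)) - (t:ℂ))/(1 - (t:ℂ)*(x:ℂ)) = (((x - t)/(1 - t*x) : ℝ) : ℂ) := by
    push_cast; ring
  have hu2 : 0 < 1 - ((x - t)/(1 - t*x))^2 := by
    rw [div_pow, sub_pos, div_lt_one (by positivity)]
    nlinarith [mul_pos (show (0:ℝ) < 1 - t^2 by nlinarith) (show (0:ℝ) < 1 - x^2 by nlinarith)]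
  rw [hu, Complex.conj_ofReal]
  simp only [Complex.norm_real, Real.norm_eq_abs, _root_.sq_abs, abs_of_pos hx0]
  have hne1 : ((1:ℂ) - (x:ℂ)) ≠ 0 := by
    rw [show ((1:ℂ) - (x:ℂ)) = ((1 - x : ℝ):ℂ) by push_cast; ring]
    exact_mod_cast ne_of_gt hxx
  have hne2 : ((1:ℂ) - (t:ℂ)*(x:ℂ)) ≠ 0 := by
    rw [show ((1:ℂ) - (t:ℂ)*(x:ℂ)) = ((1 - t*x : ℝ):ℂ) by push_cast; ring]
    exact_mod_cast ne_of_gt htx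
  have hne3 : (((1 - ((x - t)/(1 - t*x))^2 : ℝ)):ℂ) ≠ 0 := by
    exact_mod_cast ne_of_gt hu2
  have hx2 : (0:ℝ) < 1 - x^2 := by nlinarith
  have ht2 : (0:ℝ) < 1 - t^2 := by nlinarith
  have e0R : (1:ℝ) - ((x - t)/(1 - t*x))^2 = (1-t^2)*(1-x^2)/(1-t*x)^2 := by
    rw [div_pow, eq_div_iff (pow_ne_zero 2 (ne_of_gt htx)), sub_mul, div_mul_cancel₀ _ (pow_ne_zero 2 (ne_of_gt htx))]
    ring
  have hcast : (α:ℂ)/(1-(x:ℂ)) -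
      (((x - t)/(1 - t*x) : ℝ) : ℂ) * ((1 - (t:ℂ)^2)/(1 - (t:ℂ)*(x:ℂ))^2) /
        ((1 - ((x - t)/(1 - t*x))^2 : ℝ) : ℂ)
      = ((α/(1-x) - ((x - t)/(1 - t*x))*((1-t^2)/(1-t*x)^2)/(1-((x - t)/(1 - t*x))^2) : ℝ) : ℂ) := by
    push_cast
    ring
  have hreal : α/(1-x) - ((x - t)/(1 - t*x))*((1-t^2)/(1-t*x)^2)/(1-((x - t)/(1 - t*x))^2)
      = α/(1-x) + (t-x)/((1-t*x)*(1-x^2)) := by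
    rw [e0R]
    have h1 : (1:ℝ)-t^2 ≠ 0 := ne_of_gt ht2
    have h2 : (1:ℝ)-x^2 ≠ 0 := ne_of_gt hx2
    have h3 : (1:ℝ)-t*x ≠ 0 := ne_of_gt htx
    have h4 : (1:ℝ)-x ≠ 0 := ne_of_gt hxx
    field_simp
    ring
  rw [hcast, hreal, Complex.norm_real, Real.norm_eq_abs]
  have hvpos : (0:ℝ) < α/(1-x) + (t-x)/((1-t*x)*(1-x^2)) :=
    add_pos (div_pos hα hxx) (div_pos (by linarith) (mul_pos htx hx2))
  rw [abs_of_pos hvpos]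
  have h2 : (1:ℝ)-x^2 ≠ 0 := ne_of_gt hx2
  have h3 : (1:ℝ)-t*x ≠ 0 := ne_of_gt htx
  have h4 : (1:ℝ)-x ≠ 0 := ne_of_gt hxx
  field_simp
  ring

theorem stmt17 (α : ℝ) (hα : α ∈ Set.Ioc (0:ℝ) 3) (ε : ℝ) (hε : 0 < ε)
    (h : ℂ → ℂ) (hh : DifferentiableOn ℂ h (ball 0 1)) (h0 : h 0 = 0)
    (hd : ∀ z ∈ ball (0:ℂ) 1, deriv h z = (1 - z) ^ (-(α : ℂ))) :
    ∃ t ∈ Set.Ioo (0:ℝ) 1,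
      2 * α + 1 - ε ≤
        ⨆ z : ball (0:ℂ) 1,
          (1 - ‖(z : ℂ)‖ ^ 2) *
            ‖(deriv (deriv h) (z : ℂ) / deriv h (z : ℂ) -
              (starRingEnd ℂ) (((z : ℂ) - (t : ℂ)) / (1 - (t : ℂ) * (z : ℂ))) *
                deriv (fun w => (w - (t : ℂ)) / (1 - (t : ℂ) * w)) (z : ℂ) /
                  ((1 - ‖(((z : ℂ) - (t : ℂ)) / (1 - (t : ℂ) * (z : ℂ)))‖ ^ 2 : ℝ) : ℂ))‖ := by
  obtain ⟨hα0, hα3⟩ := hα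
  set e : ℝ := min ε 2 with he
  have he0 : 0 < e := lt_min hε (by norm_num)
  have he2 : e ≤ 2 := min_le_right _ _
  have heε : e ≤ ε := min_le_left _ _
  set δ : ℝ := e / (2*α + 2) with hδ
  have hδ0 : 0 < δ := div_pos he0 (by linarith)
  have hδ1 : δ < 1 := by
    rw [hδ, div_lt_one (by linarith)]
    linarith
  set x : ℝ := 1 - δ with hxdef
  set t : ℝ := 1 - δ * e / 8 with htdef
  have hx0 : 0 < x := by simp only [hxdef]; linarith
  have hxt : x < t := by
    simp only [hxdef, htdef]
    nlinarith
  have ht1 : t < 1 := by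
    simp only [htdef]
    nlinarith
  have ht0 : 0 < t := hx0.trans hxt
  have htmem : t ∈ Set.Ioo (0:ℝ) 1 := ⟨ht0, ht1⟩
  refine ⟨t, htmem, ?_⟩
  have hx1 : x < 1 := hxt.trans ht1
  -- the evaluation point
  have hxball : (x:ℂ) ∈ ball (0:ℂ) 1 := by
    rw [mem_ball_zero_iff]
    simp only [Complex.norm_real, Real.norm_eq_abs]
    rw [abs_of_pos hx0]
    exact hx1
  -- rewrite the generic term
  have hrw : ∀ z : ℂ, z ∈ ball (0:ℂ) 1 →
      (1 - ‖z‖ ^ 2) *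
        ‖(deriv (deriv h) z / deriv h z -
          (starRingEnd ℂ) ((z - (t:ℂ)) / (1 - (t:ℂ) * z)) *
            deriv (fun w => (w - (t:ℂ)) / (1 - (t:ℂ) * w)) z /
              ((1 - ‖((z - (t:ℂ)) / (1 - (t:ℂ) * z))‖ ^ 2 : ℝ) : ℂ))‖
      = (1 - ‖z‖ ^ 2) *
        ‖((α:ℂ)/(1-z) -
          (starRingEnd ℂ) ((z - (t:ℂ))/(1 - (t:ℂ)*z)) * ((1 - (t:ℂ)^2)/(1 - (t:ℂ)*z)^2) /
            ((1 - ‖((z - (t:ℂ))/(1 - (t:ℂ)*z))‖ ^ 2 : ℝ) : ℂ))‖ := by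
    intro z hz
    have hz' : ‖z‖ < 1 := by simpa using mem_ball_zero_iff.mp hz
    rw [ratio_eq α h hd hz, mobius_deriv t htmem hz']
  have hbdd : BddAbove (Set.range fun z : ball (0:ℂ) 1 =>
      (1 - ‖(z : ℂ)‖ ^ 2) *
        ‖(deriv (deriv h) (z : ℂ) / deriv h (z : ℂ) -
          (starRingEnd ℂ) (((z : ℂ) - (t : ℂ)) / (1 - (t : ℂ) * (z : ℂ))) *
            deriv (fun w => (w - (t : ℂ)) / (1 - (t : ℂ) * w)) (z : ℂ) /
              ((1 - ‖(((z : ℂ) - (t : ℂ)) / (1 - (t : ℂ) * (z : ℂ)))‖ ^ 2 : ℝ) : ℂ))‖) := by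
    refine ⟨2*α + 1, ?_⟩
    rintro y ⟨z, rfl⟩
    have hz := z.2
    have hz' : ‖(z:ℂ)‖ < 1 := by simpa using mem_ball_zero_iff.mp hz
    dsimp only
    rw [hrw (z:ℂ) hz]
    exact upper α t hα0 htmem hz'
  have hle := le_ciSup hbdd (⟨(x:ℂ), hxball⟩ : ball (0:ℂ) 1)
  have hx' : ‖((x:ℂ))‖ < 1 := by
    rw [Complex.norm_real, Real.norm_eq_abs, abs_of_pos hx0]; exact hx1
  rw [hrw (x:ℂ) hxball, value α t x hα0 hx0 hxt ht1] at hle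
  refine le_trans ?_ hle
  -- numeric estimate
  have htx : 0 < 1 - t*x := by nlinarith
  have hg : 1 - e/4 ≤ (t-x)/(1-t*x) := by
    rw [le_div_iff₀ htx]
    simp only [hxdef, htdef]
    nlinarith [sq_nonneg e, sq_nonneg δ, mul_pos hδ0 he0, mul_nonneg (mul_nonneg he0.le he0.le) hδ0.le]
  have hax : 2*α - e/2 ≤ α*(1+x) := by
    simp only [hxdef]
    have : α * δ ≤ e/2 := by
      rw [hδ, mul_div_assoc', div_le_div_iff₀ (by linarith) (by norm_num)]
      nlinarith
    nlinarith
  linarith
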